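/- Let X₁,…,Xₙ, Y be Banach spaces. The function γ is a norm on the algebraic tensor product X₁ ⊗ ⋯ ⊗ Xₙ ⊗ Y, and for all decomposable tensors p, q ∈ Σ_{X₁,…,Xₙ} and all y ∈ Y one has γ((p − q) ⊗ y) ≤ π(p − q) · ‖y‖. -/

import Mathlib

open scoped NNReal

noncomputable section

universe u

variable (𝕜 : Type u) [RCLike 𝕜]

/-- A factorization of the bounded multilinear operator `T` through a Hilbert space:
a Hilbert space `H`, a bounded multilinear operator `A` into `H`, and a Lipschitz map `B`
defined on the image of `A`, such that `T = B ∘ A`. -/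
structure HilbertFactorization {n : ℕ} {X : Fin n → Type u} {Y : Type u}
    [∀ i, NormedAddCommGroup (X i)] [∀ i, NormedSpace 𝕜 (X i)]
    [NormedAddCommGroup Y] [NormedSpace 𝕜 Y]
    (T : ContinuousMultilinearMap 𝕜 X Y) where
  H : Type u
  [instNormed : NormedAddCommGroup H]
  [instInner : InnerProductSpace 𝕜 H]
  [instComplete : CompleteSpace H]
  A : ContinuousMultilinearMap 𝕜 X H
  B : H → Y
  K : ℝ≥0
  lipschitz : LipschitzOnWith K B (Set.range fun x => A x)
  factors : ∀ x, T x = B (A x)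

attribute [instance] HilbertFactorization.instNormed HilbertFactorization.instInner
  HilbertFactorization.instComplete

variable {𝕜}

/-- `T` factors through a Hilbert space. -/
def FactorsThroughHilbert {n : ℕ} {X : Fin n → Type u} {Y : Type u}
    [∀ i, NormedAddCommGroup (X i)] [∀ i, NormedSpace 𝕜 (X i)]
    [NormedAddCommGroup Y] [NormedSpace 𝕜 Y]
    (T : ContinuousMultilinearMap 𝕜 X Y) : Prop :=
  Nonempty (HilbertFactorization 𝕜 T)

/-- The constant `Γ(T)`: the infimum of `‖A‖ · Lip(B)` over all factorizations of `T`
through a Hilbert space. -/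
def gammaNorm {n : ℕ} {X : Fin n → Type u} {Y : Type u}
    [∀ i, NormedAddCommGroup (X i)] [∀ i, NormedSpace 𝕜 (X i)]
    [NormedAddCommGroup Y] [NormedSpace 𝕜 Y]
    (T : ContinuousMultilinearMap 𝕜 X Y) : ℝ :=
  sInf {c : ℝ | ∃ F : HilbertFactorization 𝕜 T, c = ‖F.A‖ * (F.K : ℝ)}

open scoped TensorProduct
open PiTensorProduct

variable (𝕜)

/-- The relation `≤_π` between finite families of (pairs of) decomposable tensors,
parametrized by the generating tuples: `(pᵢ, qᵢ) ≤_π (aᵢ, bᵢ)` iff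
`∑ᵢ |f_φ(pᵢ) − f_φ(qᵢ)|² ≤ ∑ᵢ |f_φ(aᵢ) − f_φ(bᵢ)|²` for every bounded multilinear
functional `φ` on `X₁ × ⋯ × Xₙ`. -/
def LePi {n m : ℕ} {X : Fin n → Type u}
    [∀ i, NormedAddCommGroup (X i)] [∀ i, NormedSpace 𝕜 (X i)]
    (p q a b : Fin m → ∀ i, X i) : Prop :=
  ∀ φ : ContinuousMultilinearMap 𝕜 X 𝕜,
    ∑ i, ‖φ (p i) - φ (q i)‖ ^ 2 ≤ ∑ i, ‖φ (a i) - φ (b i)‖ ^ 2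

/-- The tensor norm `γ` on `X₁ ⊗ ⋯ ⊗ Xₙ ⊗ Y`:
`γ(u) = inf (∑ᵢ π(aᵢ − bᵢ)²)^{1/2} (∑ᵢ ‖yᵢ‖²)^{1/2}`, the infimum over all representations
`u = ∑ᵢ (pᵢ − qᵢ) ⊗ yᵢ` with `pᵢ, qᵢ, aᵢ, bᵢ` decomposable and `(pᵢ, qᵢ) ≤_π (aᵢ, bᵢ)`. -/
def gammaTensor {n : ℕ} {X : Fin n → Type u} {Y : Type u}
    [∀ i, NormedAddCommGroup (X i)] [∀ i, NormedSpace 𝕜 (X i)]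
    [NormedAddCommGroup Y] [NormedSpace 𝕜 Y]
    (u : (⨂[𝕜] i, X i) ⊗[𝕜] Y) : ℝ :=
  sInf {r : ℝ | ∃ (m : ℕ) (p q a b : Fin m → ∀ i, X i) (y : Fin m → Y),
    (u = ∑ i, ((⨂ₜ[𝕜] j, p i j) - ⨂ₜ[𝕜] j, q i j) ⊗ₜ[𝕜] y i) ∧
    LePi 𝕜 p q a b ∧
    r = Real.sqrt (∑ i, projectiveSeminorm ((⨂ₜ[𝕜] j, a i j) - ⨂ₜ[𝕜] j, b i j) ^ 2) *
        Real.sqrt (∑ i, ‖y i‖ ^ 2)}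

variable {𝕜}

section GammaAux

variable {n : ℕ} {X : Fin n → Type u} {Y : Type u}
    [∀ i, NormedAddCommGroup (X i)] [∀ i, NormedSpace 𝕜 (X i)]
    [NormedAddCommGroup Y] [NormedSpace 𝕜 Y]

variable (𝕜) in
/-- The defining set of `gammaTensor`. -/
def gammaSet (u : (⨂[𝕜] i, X i) ⊗[𝕜] Y) : Set ℝ :=
  {r : ℝ | ∃ (m : ℕ) (p q a b : Fin m → ∀ i, X i) (y : Fin m → Y),
    (u = ∑ i, ((⨂ₜ[𝕜] j, p i j) - ⨂ₜ[𝕜] j, q i j) ⊗ₜ[𝕜] y i) ∧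
    LePi 𝕜 p q a b ∧
    r = Real.sqrt (∑ i, projectiveSeminorm ((⨂ₜ[𝕜] j, a i j) - ⨂ₜ[𝕜] j, b i j) ^ 2) *
        Real.sqrt (∑ i, ‖y i‖ ^ 2)}

lemma gammaTensor_eq_sInf (u : (⨂[𝕜] i, X i) ⊗[𝕜] Y) :
    gammaTensor 𝕜 u = sInf (gammaSet 𝕜 u) := rfl

lemma gammaSet_nonneg {u : (⨂[𝕜] i, X i) ⊗[𝕜] Y} {r : ℝ} (hr : r ∈ gammaSet 𝕜 u) : 0 ≤ r := by
  obtain ⟨m, p, q, a, b, y, -, -, rfl⟩ := hr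
  positivity

lemma gammaSet_bddBelow (u : (⨂[𝕜] i, X i) ⊗[𝕜] Y) : BddBelow (gammaSet 𝕜 u) :=
  ⟨0, fun _ hr => gammaSet_nonneg hr⟩

lemma tprod_zero_fun (hn : 0 < n) : (⨂ₜ[𝕜] j, (0 : X j)) = 0 :=
  MultilinearMap.map_coord_zero (PiTensorProduct.tprod 𝕜) (⟨0, hn⟩ : Fin n) rfl

/-- Concatenation of two representations. -/
lemma rep_append {u v : (⨂[𝕜] i, X i) ⊗[𝕜] Y} {m₁ m₂ : ℕ}
    {p₁ q₁ a₁ b₁ : Fin m₁ → ∀ i, X i} {y₁ : Fin m₁ → Y}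
    {p₂ q₂ a₂ b₂ : Fin m₂ → ∀ i, X i} {y₂ : Fin m₂ → Y}
    (hu : u = ∑ i, ((⨂ₜ[𝕜] j, p₁ i j) - ⨂ₜ[𝕜] j, q₁ i j) ⊗ₜ[𝕜] y₁ i)
    (hv : v = ∑ i, ((⨂ₜ[𝕜] j, p₂ i j) - ⨂ₜ[𝕜] j, q₂ i j) ⊗ₜ[𝕜] y₂ i)
    (h₁ : LePi 𝕜 p₁ q₁ a₁ b₁) (h₂ : LePi 𝕜 p₂ q₂ a₂ b₂) :
    (u + v = ∑ i : Fin (m₁ + m₂),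
        ((⨂ₜ[𝕜] j, Fin.append p₁ p₂ i j) - ⨂ₜ[𝕜] j, Fin.append q₁ q₂ i j) ⊗ₜ[𝕜]
          Fin.append y₁ y₂ i) ∧
    LePi 𝕜 (Fin.append p₁ p₂) (Fin.append q₁ q₂) (Fin.append a₁ a₂) (Fin.append b₁ b₂) ∧
    (∑ i : Fin (m₁ + m₂), projectiveSeminorm
        ((⨂ₜ[𝕜] j, Fin.append a₁ a₂ i j) - ⨂ₜ[𝕜] j, Fin.append b₁ b₂ i j) ^ 2
      = ∑ i, projectiveSeminorm ((⨂ₜ[𝕜] j, a₁ i j) - ⨂ₜ[𝕜] j, b₁ i j) ^ 2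
        + ∑ i, projectiveSeminorm ((⨂ₜ[𝕜] j, a₂ i j) - ⨂ₜ[𝕜] j, b₂ i j) ^ 2) ∧
    (∑ i : Fin (m₁ + m₂), ‖Fin.append y₁ y₂ i‖ ^ 2
      = ∑ i, ‖y₁ i‖ ^ 2 + ∑ i, ‖y₂ i‖ ^ 2) := by
  refine ⟨?_, ?_, ?_, ?_⟩
  · rw [Fin.sum_univ_add]
    simp only [Fin.append_left, Fin.append_right]
    rw [hu, hv]
  · intro φ
    rw [Fin.sum_univ_add, Fin.sum_univ_add]
    simp only [Fin.append_left, Fin.append_right]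
    exact add_le_add (h₁ φ) (h₂ φ)
  · rw [Fin.sum_univ_add]
    simp only [Fin.append_left, Fin.append_right]
  · rw [Fin.sum_univ_add]
    simp only [Fin.append_left, Fin.append_right]

/-- Every element has a representation. -/
lemma exists_rep (hn : 0 < n) (u : (⨂[𝕜] i, X i) ⊗[𝕜] Y) :
    ∃ (m : ℕ) (p q a b : Fin m → ∀ i, X i) (y : Fin m → Y),
      (u = ∑ i, ((⨂ₜ[𝕜] j, p i j) - ⨂ₜ[𝕜] j, q i j) ⊗ₜ[𝕜] y i) ∧ LePi 𝕜 p q a b := by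
  induction u using TensorProduct.induction_on with
  | zero =>
      exact ⟨0, Fin.elim0, Fin.elim0, Fin.elim0, Fin.elim0, Fin.elim0, by simp, fun φ => by simp⟩
  | tmul s y =>
      induction s using PiTensorProduct.induction_on with
      | smul_tprod c x =>
          refine ⟨1, fun _ => x, fun _ _ => 0, fun _ => x, fun _ _ => 0, fun _ => c • y, ?_,
            fun φ => le_rfl⟩
          rw [Fin.sum_univ_one, tprod_zero_fun hn, sub_zero]
          exact TensorProduct.smul_tmul c ((PiTensorProduct.tprod 𝕜) x) y
      | add s₁ s₂ ih₁ ih₂ =>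
          obtain ⟨m₁, p₁, q₁, a₁, b₁, y₁, hu, h₁⟩ := ih₁
          obtain ⟨m₂, p₂, q₂, a₂, b₂, y₂, hv, h₂⟩ := ih₂
          obtain ⟨h, hle, -, -⟩ := rep_append hu hv h₁ h₂
          exact ⟨m₁ + m₂, _, _, _, _, _, by rw [TensorProduct.add_tmul]; exact h, hle⟩
  | add u v ihu ihv =>
      obtain ⟨m₁, p₁, q₁, a₁, b₁, y₁, hu, h₁⟩ := ihu
      obtain ⟨m₂, p₂, q₂, a₂, b₂, y₂, hv, h₂⟩ := ihv
      obtain ⟨h, hle, -, -⟩ := rep_append hu hv h₁ h₂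
      exact ⟨m₁ + m₂, _, _, _, _, _, h, hle⟩

lemma gammaSet_nonempty (hn : 0 < n) (u : (⨂[𝕜] i, X i) ⊗[𝕜] Y) :
    (gammaSet 𝕜 u).Nonempty := by
  obtain ⟨m, p, q, a, b, y, hu, hle⟩ := exists_rep hn u
  exact ⟨_, m, p, q, a, b, y, hu, hle, rfl⟩

end GammaAux
section GammaSep

variable {n : ℕ} {X : Fin n → Type u} {Y : Type u}
    [∀ i, NormedAddCommGroup (X i)] [∀ i, NormedSpace 𝕜 (X i)]
    [NormedAddCommGroup Y] [NormedSpace 𝕜 Y]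

/-- Continuous multilinear functionals separate points of the algebraic tensor product. -/
lemma piTensor_eq_zero_of_forall (s : ⨂[𝕜] i, X i)
    (h : ∀ φ : ContinuousMultilinearMap 𝕜 X 𝕜,
      PiTensorProduct.lift φ.toMultilinearMap s = 0) :
    s = 0 := by
  classical
  -- choose a finite representation of `s` by decomposable tensors
  have hs : s ∈ Submodule.span 𝕜 (Set.range (PiTensorProduct.tprod 𝕜 (s := X))) := by
    rw [PiTensorProduct.span_tprod_eq_top]; trivial
  obtain ⟨m, c, z, hsum⟩ := Submodule.mem_span_set'.mp hs
  choose x hx using fun i => (z i).2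
  -- the finite-dimensional subspaces spanned by the components
  set V : ∀ j, Submodule 𝕜 (X j) := fun j => Submodule.span 𝕜 (Set.range fun i => x i j) with hV
  haveI : ∀ j, FiniteDimensional 𝕜 (V j) := fun j =>
    FiniteDimensional.span_of_finite 𝕜 (Set.finite_range _)
  set d : Fin n → ℕ := fun j => Module.finrank 𝕜 (V j) with hd
  set b : ∀ j, Module.Basis (Fin (d j)) 𝕜 (V j) := fun j => Module.finBasis 𝕜 (V j) with hb
  -- extend the coordinate functionals to continuous functionals on the whole space
  have hext : ∀ (j : Fin n) (β : Fin (d j)), ∃ g : X j →L[𝕜] 𝕜,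
      ∀ v : V j, g v = (b j).coord β v := by
    intro j β
    obtain ⟨g, hg, -⟩ := exists_extension_norm_eq (V j)
      (LinearMap.toContinuousLinearMap ((b j).coord β))
    exact ⟨g, fun v => by rw [hg v]; rfl⟩
  choose g hg using hext
  -- every multilinear functional agrees with a continuous one on `∏ j, V j`
  have key : ∀ M : MultilinearMap 𝕜 X 𝕜, ∃ φ : ContinuousMultilinearMap 𝕜 X 𝕜,
      ∀ v : ∀ j, X j, (∀ j, v j ∈ V j) → φ v = M v := by
    intro M
    refine ⟨∑ α : ∀ j, Fin (d j), (M fun j => ((b j) (α j) : X j)) •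
      ((ContinuousMultilinearMap.mkPiAlgebra 𝕜 (Fin n) 𝕜).compContinuousLinearMap
        fun j => g j (α j)), fun v hv => ?_⟩
    set r : ∀ j, Fin (d j) → 𝕜 := fun j β => (b j).repr ⟨v j, hv j⟩ β with hr
    have hrepr : v = fun j => ∑ β, r j β • ((b j β : X j)) := by
      funext j
      have h2 : (∑ β, r j β • ((b j β : X j))) = v j := by
        have := congrArg (fun w : V j => (w : X j)) ((b j).sum_repr ⟨v j, hv j⟩)
        simpa only [Submodule.coe_sum, Submodule.coe_smul] using this
      exact h2.symm
    have hMv : M v = ∑ α : ∀ j, Fin (d j),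
        (∏ j, r j (α j)) • (M fun j => ((b j) (α j) : X j)) := by
      conv_lhs => rw [hrepr]
      rw [M.map_sum (g := fun j β => r j β • ((b j β : X j)))]
      exact Finset.sum_congr rfl fun α _ => M.map_smul_univ _ _
    have hgv : ∀ (j : Fin n) (β : Fin (d j)), g j β (v j) = r j β := by
      intro j β
      have : g j β ((⟨v j, hv j⟩ : V j) : X j) = (b j).coord β ⟨v j, hv j⟩ := hg j β _
      rw [show ((⟨v j, hv j⟩ : V j) : X j) = v j from rfl] at this
      rw [this]; rfl
    rw [hMv]
    rw [ContinuousMultilinearMap.sum_apply]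
    refine Finset.sum_congr rfl fun α _ => ?_
    rw [ContinuousMultilinearMap.smul_apply,
      ContinuousMultilinearMap.compContinuousLinearMap_apply,
      ContinuousMultilinearMap.mkPiAlgebra_apply]
    simp only [hgv, smul_eq_mul]
    ring
  -- conclude via the algebraic duality
  refine (Module.forall_dual_apply_eq_zero_iff 𝕜 s).mp fun f => ?_
  set M : MultilinearMap 𝕜 X 𝕜 := PiTensorProduct.lift.symm f with hM
  obtain ⟨φ, hφ⟩ := key M
  have hfM : ∀ v : ∀ j, X j, f (PiTensorProduct.tprod 𝕜 v) = M v := by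
    intro v
    conv_lhs => rw [show f = PiTensorProduct.lift M from
      (LinearEquiv.apply_symm_apply PiTensorProduct.lift f).symm]
    rw [PiTensorProduct.lift.tprod]
  have hmem : ∀ (i) (j : Fin n), x i j ∈ V j := fun i j =>
    Submodule.subset_span ⟨i, rfl⟩
  have hfs : f s = PiTensorProduct.lift φ.toMultilinearMap s := by
    rw [← hsum, map_sum, map_sum]
    refine Finset.sum_congr rfl fun i _ => ?_
    rw [map_smul, map_smul, ← hx i, hfM, PiTensorProduct.lift.tprod,
      ContinuousMultilinearMap.coe_coe, hφ _ (hmem i)]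
  rw [hfs, h φ]

end GammaSep
section GammaZero

variable {n : ℕ} {X : Fin n → Type u} {Y : Type u}
    [∀ i, NormedAddCommGroup (X i)] [∀ i, NormedSpace 𝕜 (X i)]
    [NormedAddCommGroup Y] [NormedSpace 𝕜 Y]

/-- Every tensor has a representation with linearly independent second factors. -/
lemma exists_indep_rep (u : (⨂[𝕜] i, X i) ⊗[𝕜] Y) :
    ∃ (k : ℕ) (t : Fin k → ⨂[𝕜] i, X i) (e : Fin k → Y),
      u = ∑ i, t i ⊗ₜ[𝕜] e i ∧ LinearIndependent 𝕜 e := by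
  classical
  obtain ⟨S, hS⟩ := TensorProduct.exists_finset u
  set V : Submodule 𝕜 Y :=
    Submodule.span 𝕜 (Prod.snd '' (S : Set ((⨂[𝕜] i, X i) × Y))) with hV
  haveI : FiniteDimensional 𝕜 V :=
    FiniteDimensional.span_of_finite 𝕜 ((S.finite_toSet).image _)
  set k := Module.finrank 𝕜 V with hk
  set b : Module.Basis (Fin k) 𝕜 V := Module.finBasis 𝕜 V with hb
  have hmem : ∀ z ∈ S, (z : (⨂[𝕜] i, X i) × Y).2 ∈ V := fun z hz =>
    Submodule.subset_span ⟨z, hz, rfl⟩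
  refine ⟨k, fun i => ∑ z ∈ S.attach, (b.repr ⟨z.1.2, hmem z.1 z.2⟩ i) • z.1.1,
    fun i => (b i : Y), ?_, b.linearIndependent.map' V.subtype V.ker_subtype⟩
  have step1 : u = ∑ z ∈ S.attach, z.1.1 ⊗ₜ[𝕜] z.1.2 := by
    rw [hS, ← Finset.sum_attach S fun z => z.1 ⊗ₜ[𝕜] z.2]
  rw [step1]
  have step2 : ∀ z : {x // x ∈ S}, z.1.1 ⊗ₜ[𝕜] z.1.2
      = ∑ i, (b.repr ⟨z.1.2, hmem z.1 z.2⟩ i • z.1.1) ⊗ₜ[𝕜] (b i : Y) := by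
    intro z
    have h3 : (z.1.2 : Y) = ∑ i, b.repr ⟨z.1.2, hmem z.1 z.2⟩ i • (b i : Y) := by
      have := congrArg (fun w : V => (w : Y)) (b.sum_repr ⟨z.1.2, hmem z.1 z.2⟩)
      simpa only [Submodule.coe_sum, Submodule.coe_smul] using this.symm
    conv_lhs => rw [h3]
    rw [TensorProduct.tmul_sum]
    exact Finset.sum_congr rfl fun i _ => (TensorProduct.smul_tmul _ _ _).symm
  calc ∑ z ∈ S.attach, z.1.1 ⊗ₜ[𝕜] z.1.2
      = ∑ z ∈ S.attach, ∑ i, (b.repr ⟨z.1.2, hmem z.1 z.2⟩ i • z.1.1) ⊗ₜ[𝕜] (b i : Y) :=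
        Finset.sum_congr rfl fun z _ => step2 z
    _ = ∑ i, ∑ z ∈ S.attach, (b.repr ⟨z.1.2, hmem z.1 z.2⟩ i • z.1.1) ⊗ₜ[𝕜] (b i : Y) :=
        Finset.sum_comm
    _ = ∑ i, (∑ z ∈ S.attach, b.repr ⟨z.1.2, hmem z.1 z.2⟩ i • z.1.1) ⊗ₜ[𝕜] (b i : Y) := by
        exact Finset.sum_congr rfl fun i _ => (TensorProduct.sum_tmul _ _ _).symm

variable (𝕜) in
/-- The pairing of a continuous multilinear functional and a continuous functional. -/
def pairF (φ : ContinuousMultilinearMap 𝕜 X 𝕜) (ψ : Y →L[𝕜] 𝕜) :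
    ((⨂[𝕜] i, X i) ⊗[𝕜] Y) →ₗ[𝕜] 𝕜 :=
  TensorProduct.lift ((LinearMap.mul 𝕜 𝕜).compl₁₂
    (PiTensorProduct.lift φ.toMultilinearMap) ψ.toLinearMap)

lemma pairF_tmul (φ : ContinuousMultilinearMap 𝕜 X 𝕜) (ψ : Y →L[𝕜] 𝕜)
    (s : ⨂[𝕜] i, X i) (y : Y) :
    pairF 𝕜 φ ψ (s ⊗ₜ[𝕜] y) = PiTensorProduct.lift φ.toMultilinearMap s * ψ y := rfl

lemma eq_zero_of_forall_pairF (u : (⨂[𝕜] i, X i) ⊗[𝕜] Y)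
    (h : ∀ (φ : ContinuousMultilinearMap 𝕜 X 𝕜) (ψ : Y →L[𝕜] 𝕜), pairF 𝕜 φ ψ u = 0) :
    u = 0 := by
  obtain ⟨k, t, e, hu, he⟩ := exists_indep_rep u
  have hcoef : ∀ (φ : ContinuousMultilinearMap 𝕜 X 𝕜) (i : Fin k),
      PiTensorProduct.lift φ.toMultilinearMap (t i) = 0 := by
    intro φ
    have hw : ∀ ψ : Y →L[𝕜] 𝕜,
        ψ (∑ i, PiTensorProduct.lift φ.toMultilinearMap (t i) • e i) = 0 := by
      intro ψ
      have h1 := h φ ψ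
      rw [hu, map_sum] at h1
      simp only [pairF_tmul] at h1
      rw [map_sum]
      simpa [map_smul, smul_eq_mul] using h1
    have hw0 : (∑ i, PiTensorProduct.lift φ.toMultilinearMap (t i) • e i) = 0 := by
      by_contra hne
      obtain ⟨ψ, -, hψ⟩ := exists_dual_vector 𝕜 _ (norm_ne_zero_iff.mpr hne)
      have h2 : ((‖∑ i, PiTensorProduct.lift φ.toMultilinearMap (t i) • e i‖ : ℝ) : 𝕜) = 0 := by
        rw [← hψ, hw ψ]
      exact hne (norm_eq_zero.mp (by exact_mod_cast h2))
    exact Fintype.linearIndependent_iff.mp he _ hw0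
  have ht : ∀ i, t i = 0 := fun i =>
    piTensor_eq_zero_of_forall (t i) fun φ => hcoef φ i
  rw [hu]
  simp [ht]

/-- Cauchy–Schwarz for finite real sums. -/
lemma sum_mul_le_sqrt_mul_sqrt {m : ℕ} (f g : Fin m → ℝ) (hf : ∀ i, 0 ≤ f i)
    (hg : ∀ i, 0 ≤ g i) :
    ∑ i, f i * g i ≤ Real.sqrt (∑ i, f i ^ 2) * Real.sqrt (∑ i, g i ^ 2) := by
  have h := Finset.sum_mul_sq_le_sq_mul_sq Finset.univ f g
  have h0 : 0 ≤ ∑ i, f i * g i := Finset.sum_nonneg fun i _ => mul_nonneg (hf i) (hg i)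
  calc ∑ i, f i * g i = Real.sqrt ((∑ i, f i * g i) ^ 2) := (Real.sqrt_sq h0).symm
    _ ≤ Real.sqrt ((∑ i, f i ^ 2) * ∑ i, g i ^ 2) := Real.sqrt_le_sqrt h
    _ = _ := Real.sqrt_mul (Finset.sum_nonneg fun i _ => sq_nonneg _) _

lemma pairF_le (φ : ContinuousMultilinearMap 𝕜 X 𝕜) (ψ : Y →L[𝕜] 𝕜)
    {u : (⨂[𝕜] i, X i) ⊗[𝕜] Y} {r : ℝ} (hr : r ∈ gammaSet 𝕜 u) :
    ‖pairF 𝕜 φ ψ u‖ ≤ ‖φ‖ * ‖ψ‖ * r := by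
  obtain ⟨m, p, q, a, b, y, hu, hle, rfl⟩ := hr
  have hFu : pairF 𝕜 φ ψ u = ∑ i, (φ (p i) - φ (q i)) * ψ (y i) := by
    rw [hu, map_sum]
    refine Finset.sum_congr rfl fun i _ => ?_
    rw [pairF_tmul, map_sub, PiTensorProduct.lift.tprod, PiTensorProduct.lift.tprod]
    rfl
  have h1 : Real.sqrt (∑ i, ‖φ (p i) - φ (q i)‖ ^ 2) ≤
      ‖φ‖ * Real.sqrt (∑ i, projectiveSeminorm ((⨂ₜ[𝕜] j, a i j) - ⨂ₜ[𝕜] j, b i j) ^ 2) := by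
    have hA : ∑ i, ‖φ (p i) - φ (q i)‖ ^ 2 ≤
        ‖φ‖ ^ 2 * ∑ i, projectiveSeminorm ((⨂ₜ[𝕜] j, a i j) - ⨂ₜ[𝕜] j, b i j) ^ 2 := by
      refine (hle φ).trans ?_
      rw [Finset.mul_sum]
      refine Finset.sum_le_sum fun i _ => ?_
      have h2 := PiTensorProduct.norm_eval_le_projectiveSeminorm
        φ ((⨂ₜ[𝕜] j, a i j) - ⨂ₜ[𝕜] j, b i j)
      rw [map_sub, PiTensorProduct.lift.tprod, PiTensorProduct.lift.tprod] at h2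
      have h2' : ‖φ (a i) - φ (b i)‖ ≤
          projectiveSeminorm ((⨂ₜ[𝕜] j, a i j) - ⨂ₜ[𝕜] j, b i j) * ‖φ‖ := by
          rw [mul_comm]; exact h2
      calc ‖φ (a i) - φ (b i)‖ ^ 2
          ≤ (projectiveSeminorm ((⨂ₜ[𝕜] j, a i j) - ⨂ₜ[𝕜] j, b i j) * ‖φ‖) ^ 2 := by
            refine pow_le_pow_left₀ (norm_nonneg _) h2' 2
        _ = ‖φ‖ ^ 2 * projectiveSeminorm ((⨂ₜ[𝕜] j, a i j) - ⨂ₜ[𝕜] j, b i j) ^ 2 := by ring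
    calc Real.sqrt (∑ i, ‖φ (p i) - φ (q i)‖ ^ 2) ≤
        Real.sqrt (‖φ‖ ^ 2 * ∑ i, projectiveSeminorm ((⨂ₜ[𝕜] j, a i j) - ⨂ₜ[𝕜] j, b i j) ^ 2) :=
          Real.sqrt_le_sqrt hA
      _ = _ := by
          rw [Real.sqrt_mul (sq_nonneg _), Real.sqrt_sq (norm_nonneg _)]
  have h2 : Real.sqrt (∑ i, ‖ψ (y i)‖ ^ 2) ≤ ‖ψ‖ * Real.sqrt (∑ i, ‖y i‖ ^ 2) := by
    have hB : ∑ i, ‖ψ (y i)‖ ^ 2 ≤ ‖ψ‖ ^ 2 * ∑ i, ‖y i‖ ^ 2 := by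
      rw [Finset.mul_sum]
      refine Finset.sum_le_sum fun i _ => ?_
      calc ‖ψ (y i)‖ ^ 2 ≤ (‖ψ‖ * ‖y i‖) ^ 2 :=
            pow_le_pow_left₀ (norm_nonneg _) (ψ.le_opNorm _) 2
        _ = ‖ψ‖ ^ 2 * ‖y i‖ ^ 2 := by ring
    calc Real.sqrt (∑ i, ‖ψ (y i)‖ ^ 2) ≤ Real.sqrt (‖ψ‖ ^ 2 * ∑ i, ‖y i‖ ^ 2) :=
          Real.sqrt_le_sqrt hB
      _ = _ := by rw [Real.sqrt_mul (sq_nonneg _), Real.sqrt_sq (norm_nonneg _)]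
  calc ‖pairF 𝕜 φ ψ u‖ ≤ ∑ i, ‖φ (p i) - φ (q i)‖ * ‖ψ (y i)‖ := by
        rw [hFu]
        refine (norm_sum_le _ _).trans (le_of_eq ?_)
        exact Finset.sum_congr rfl fun i _ => norm_mul _ _
    _ ≤ Real.sqrt (∑ i, ‖φ (p i) - φ (q i)‖ ^ 2) * Real.sqrt (∑ i, ‖ψ (y i)‖ ^ 2) :=
        sum_mul_le_sqrt_mul_sqrt _ _ (fun i => norm_nonneg _) (fun i => norm_nonneg _)
    _ ≤ (‖φ‖ * Real.sqrt (∑ i, projectiveSeminorm ((⨂ₜ[𝕜] j, a i j) - ⨂ₜ[𝕜] j, b i j) ^ 2)) *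
        (‖ψ‖ * Real.sqrt (∑ i, ‖y i‖ ^ 2)) := by
        refine mul_le_mul h1 h2 (Real.sqrt_nonneg _) ?_
        positivity
    _ = ‖φ‖ * ‖ψ‖ * (Real.sqrt (∑ i, projectiveSeminorm ((⨂ₜ[𝕜] j, a i j) - ⨂ₜ[𝕜] j, b i j) ^ 2) *
        Real.sqrt (∑ i, ‖y i‖ ^ 2)) := by ring

lemma gammaTensor_zero : gammaTensor 𝕜 (0 : (⨂[𝕜] i, X i) ⊗[𝕜] Y) = 0 := by
  rw [gammaTensor_eq_sInf]
  have hmem : (0 : ℝ) ∈ gammaSet 𝕜 (0 : (⨂[𝕜] i, X i) ⊗[𝕜] Y) :=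
    ⟨0, Fin.elim0, Fin.elim0, Fin.elim0, Fin.elim0, Fin.elim0, by simp, fun φ => le_rfl,
      by simp⟩
  exact le_antisymm (csInf_le (gammaSet_bddBelow 0) hmem)
    (le_csInf ⟨0, hmem⟩ fun r hr => gammaSet_nonneg hr)

lemma gammaTensor_eq_zero_iff (hn : 0 < n) (u : (⨂[𝕜] i, X i) ⊗[𝕜] Y) :
    gammaTensor 𝕜 u = 0 ↔ u = 0 := by
  constructor
  · intro h0
    apply eq_zero_of_forall_pairF
    intro φ ψ
    by_contra hne
    have hpos : 0 < ‖pairF 𝕜 φ ψ u‖ := norm_pos_iff.mpr hne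
    have hK : 0 < ‖φ‖ * ‖ψ‖ := by
      obtain ⟨r0, hr0⟩ := gammaSet_nonempty hn u
      rcases (mul_nonneg (norm_nonneg φ) (norm_nonneg ψ)).lt_or_eq with h | h
      · exact h
      · exfalso
        have := pairF_le φ ψ hr0
        rw [← h, zero_mul] at this
        linarith
    have hlb : ‖pairF 𝕜 φ ψ u‖ / (‖φ‖ * ‖ψ‖) ≤ sInf (gammaSet 𝕜 u) := by
      refine le_csInf (gammaSet_nonempty hn u) fun r hr => ?_
      rw [div_le_iff₀ hK]
      calc ‖pairF 𝕜 φ ψ u‖ ≤ ‖φ‖ * ‖ψ‖ * r := pairF_le φ ψ hr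
        _ = r * (‖φ‖ * ‖ψ‖) := by ring
    rw [gammaTensor_eq_sInf] at h0
    rw [h0] at hlb
    have := div_pos hpos hK
    linarith
  · rintro rfl
    exact gammaTensor_zero

end GammaZero
section GammaScale

variable {n : ℕ} {X : Fin n → Type u} {Y : Type u}
    [∀ i, NormedAddCommGroup (X i)] [∀ i, NormedSpace 𝕜 (X i)]
    [NormedAddCommGroup Y] [NormedSpace 𝕜 Y]

lemma smul_mem_gammaSet (c : 𝕜) {u : (⨂[𝕜] i, X i) ⊗[𝕜] Y} {r : ℝ}
    (hr : r ∈ gammaSet 𝕜 u) : ‖c‖ * r ∈ gammaSet 𝕜 (c • u) := by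
  obtain ⟨m, p, q, a, b, y, hu, hle, rfl⟩ := hr
  have hsum : c • u = ∑ i, ((⨂ₜ[𝕜] j, p i j) - ⨂ₜ[𝕜] j, q i j) ⊗ₜ[𝕜] (c • y i) := by
    rw [hu, Finset.smul_sum]
    exact Finset.sum_congr rfl fun i _ => (TensorProduct.tmul_smul _ _ _).symm
  have hval : ‖c‖ * (Real.sqrt (∑ i, projectiveSeminorm
        ((⨂ₜ[𝕜] j, a i j) - ⨂ₜ[𝕜] j, b i j) ^ 2) * Real.sqrt (∑ i, ‖y i‖ ^ 2))
      = Real.sqrt (∑ i, projectiveSeminorm ((⨂ₜ[𝕜] j, a i j) - ⨂ₜ[𝕜] j, b i j) ^ 2) *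
        Real.sqrt (∑ i, ‖c • y i‖ ^ 2) := by
    have h1 : ∑ i, ‖c • y i‖ ^ 2 = ‖c‖ ^ 2 * ∑ i, ‖y i‖ ^ 2 := by
      rw [Finset.mul_sum]
      exact Finset.sum_congr rfl fun i _ => by rw [norm_smul]; ring
    rw [h1, Real.sqrt_mul (sq_nonneg _), Real.sqrt_sq (norm_nonneg _)]
    ring
  exact ⟨m, p, q, a, b, fun i => c • y i, hsum, hle, hval⟩

lemma gammaTensor_smul (hn : 0 < n) (c : 𝕜) (u : (⨂[𝕜] i, X i) ⊗[𝕜] Y) :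
    gammaTensor 𝕜 (c • u) = ‖c‖ * gammaTensor 𝕜 u := by
  have hle : ∀ (c : 𝕜), c ≠ 0 → ∀ u : (⨂[𝕜] i, X i) ⊗[𝕜] Y,
      gammaTensor 𝕜 (c • u) ≤ ‖c‖ * gammaTensor 𝕜 u := by
    intro c hc u
    have hK : 0 < ‖c‖ := norm_pos_iff.mpr hc
    have key : ∀ r ∈ gammaSet 𝕜 u, sInf (gammaSet 𝕜 (c • u)) ≤ ‖c‖ * r := fun r hr =>
      csInf_le (gammaSet_bddBelow _) (smul_mem_gammaSet c hr)
    have hdiv : sInf (gammaSet 𝕜 (c • u)) / ‖c‖ ≤ sInf (gammaSet 𝕜 u) := by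
      refine le_csInf (gammaSet_nonempty hn u) fun r hr => ?_
      rw [div_le_iff₀ hK]
      calc sInf (gammaSet 𝕜 (c • u)) ≤ ‖c‖ * r := key r hr
        _ = r * ‖c‖ := mul_comm _ _
    rw [gammaTensor_eq_sInf, gammaTensor_eq_sInf]
    calc sInf (gammaSet 𝕜 (c • u)) = sInf (gammaSet 𝕜 (c • u)) / ‖c‖ * ‖c‖ := by
          field_simp
      _ ≤ sInf (gammaSet 𝕜 u) * ‖c‖ := by
          exact mul_le_mul_of_nonneg_right hdiv (norm_nonneg _)
      _ = ‖c‖ * sInf (gammaSet 𝕜 u) := mul_comm _ _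
  rcases eq_or_ne c 0 with rfl | hc
  · simp [gammaTensor_zero]
  · refine le_antisymm (hle c hc u) ?_
    have h2 := hle c⁻¹ (inv_ne_zero hc) (c • u)
    rw [inv_smul_smul₀ hc, norm_inv] at h2
    calc ‖c‖ * gammaTensor 𝕜 u ≤ ‖c‖ * (‖c‖⁻¹ * gammaTensor 𝕜 (c • u)) :=
          mul_le_mul_of_nonneg_left h2 (norm_nonneg c)
      _ = gammaTensor 𝕜 (c • u) := by
          rw [← mul_assoc, mul_inv_cancel₀ (norm_pos_iff.mpr hc).ne', one_mul]

lemma rep_scale (hn : 0 < n) {u : (⨂[𝕜] i, X i) ⊗[𝕜] Y} {m : ℕ}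
    {p q a b : Fin m → ∀ i, X i} {y : Fin m → Y}
    (hu : u = ∑ i, ((⨂ₜ[𝕜] j, p i j) - ⨂ₜ[𝕜] j, q i j) ⊗ₜ[𝕜] y i)
    (hle : LePi 𝕜 p q a b) {t : ℝ} (ht : 0 < t) :
    ∃ (p' q' a' b' : Fin m → ∀ i, X i) (y' : Fin m → Y),
      (u = ∑ i, ((⨂ₜ[𝕜] j, p' i j) - ⨂ₜ[𝕜] j, q' i j) ⊗ₜ[𝕜] y' i) ∧
      LePi 𝕜 p' q' a' b' ∧
      (∑ i, projectiveSeminorm ((⨂ₜ[𝕜] j, a' i j) - ⨂ₜ[𝕜] j, b' i j) ^ 2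
        = t ^ 2 * ∑ i, projectiveSeminorm ((⨂ₜ[𝕜] j, a i j) - ⨂ₜ[𝕜] j, b i j) ^ 2) ∧
      (∑ i, ‖y' i‖ ^ 2 = (t⁻¹) ^ 2 * ∑ i, ‖y i‖ ^ 2) := by
  classical
  set i₀ : Fin n := ⟨0, hn⟩
  set c : 𝕜 := (t : 𝕜) with hcdef
  have hct : ‖c‖ = t := by rw [RCLike.norm_ofReal]; exact abs_of_pos ht
  have hc0 : c ≠ 0 := by
    intro h
    rw [h, norm_zero] at hct
    exact ht.ne hct
  -- scaled decomposable tensors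
  have htp : ∀ (v : Fin m → ∀ i, X i) (i : Fin m),
      (⨂ₜ[𝕜] j, Function.update (v i) i₀ (c • v i i₀) j) = c • ⨂ₜ[𝕜] j, v i j := by
    intro v i
    have h1 : (PiTensorProduct.tprod 𝕜) (Function.update (v i) i₀ (c • v i i₀))
        = c • (PiTensorProduct.tprod 𝕜) (v i) := by
      rw [MultilinearMap.map_update_smul, Function.update_eq_self]
    exact h1
  have hφupd : ∀ (φ : ContinuousMultilinearMap 𝕜 X 𝕜) (v : Fin m → ∀ i, X i) (i : Fin m),
      φ (Function.update (v i) i₀ (c • v i i₀)) = c • φ (v i) := by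
    intro φ v i
    rw [φ.map_update_smul, Function.update_eq_self]
  refine ⟨fun i => Function.update (p i) i₀ (c • p i i₀),
    fun i => Function.update (q i) i₀ (c • q i i₀),
    fun i => Function.update (a i) i₀ (c • a i i₀),
    fun i => Function.update (b i) i₀ (c • b i i₀),
    fun i => c⁻¹ • y i, ?_, ?_, ?_, ?_⟩
  · rw [hu]
    refine Finset.sum_congr rfl fun i _ => ?_
    rw [htp p i, htp q i, ← smul_sub, TensorProduct.smul_tmul, smul_inv_smul₀ hc0]
  · intro φ
    beta_reduce
    simp only [hφupd]
    have hleft : ∀ (v w : Fin m → ∀ i, X i),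
        ∑ i, ‖c • φ (v i) - c • φ (w i)‖ ^ 2 = ‖c‖ ^ 2 * ∑ i, ‖φ (v i) - φ (w i)‖ ^ 2 := by
      intro v w
      rw [Finset.mul_sum]
      refine Finset.sum_congr rfl fun i _ => ?_
      rw [← smul_sub, norm_smul]
      ring
    rw [hleft p q, hleft a b]
    exact mul_le_mul_of_nonneg_left (hle φ) (sq_nonneg _)
  · rw [Finset.mul_sum]
    refine Finset.sum_congr rfl fun i _ => ?_
    rw [htp a i, htp b i, ← smul_sub, map_smul_eq_mul, hct]
    ring
  · rw [Finset.mul_sum]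
    refine Finset.sum_congr rfl fun i _ => ?_
    rw [norm_smul, norm_inv, hct]
    ring

set_option maxHeartbeats 1000000 in
lemma exists_balanced (hn : 0 < n) {u : (⨂[𝕜] i, X i) ⊗[𝕜] Y} {r : ℝ}
    (hr : r ∈ gammaSet 𝕜 u) {ε : ℝ} (hε : 0 < ε) :
    ∃ (m : ℕ) (p q a b : Fin m → ∀ i, X i) (y : Fin m → Y),
      (u = ∑ i, ((⨂ₜ[𝕜] j, p i j) - ⨂ₜ[𝕜] j, q i j) ⊗ₜ[𝕜] y i) ∧ LePi 𝕜 p q a b ∧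
      (∑ i, projectiveSeminorm ((⨂ₜ[𝕜] j, a i j) - ⨂ₜ[𝕜] j, b i j) ^ 2 ≤ r + ε) ∧
      (∑ i, ‖y i‖ ^ 2 ≤ r + ε) := by
  obtain ⟨m, p, q, a, b, y, hu, hle, rfl⟩ := hr
  set A := ∑ i, projectiveSeminorm ((⨂ₜ[𝕜] j, a i j) - ⨂ₜ[𝕜] j, b i j) ^ 2 with hA
  set B := ∑ i, ‖y i‖ ^ 2 with hB
  have hA0 : 0 ≤ A := Finset.sum_nonneg fun i _ => sq_nonneg _
  have hB0 : 0 ≤ B := Finset.sum_nonneg fun i _ => sq_nonneg _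
  set P := Real.sqrt A with hP
  set Q := Real.sqrt B with hQ
  have hP0 : 0 ≤ P := Real.sqrt_nonneg _
  have hQ0 : 0 ≤ Q := Real.sqrt_nonneg _
  have hPA : P ^ 2 = A := Real.sq_sqrt hA0
  have hQB : Q ^ 2 = B := Real.sq_sqrt hB0
  set δ := ε / (P + Q + 1) with hδdef
  have hδ0 : 0 < δ := div_pos hε (by positivity)
  have hδε : δ * (P + Q + 1) = ε := by
    rw [hδdef]; field_simp
  set t := Real.sqrt ((Q + δ) / (P + δ)) with htdef
  have htpos : 0 < t := Real.sqrt_pos.mpr (div_pos (by positivity) (by positivity))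
  have ht2 : t ^ 2 = (Q + δ) / (P + δ) := Real.sq_sqrt (le_of_lt (div_pos (by positivity)
    (by positivity)))
  obtain ⟨p', q', a', b', y', hu', hle', hA', hB'⟩ := rep_scale hn hu hle htpos
  refine ⟨m, p', q', a', b', y', hu', hle', ?_, ?_⟩
  · rw [hA', ← hA, ht2, ← hPA]
    rw [div_mul_eq_mul_div, div_le_iff₀ (by positivity)]
    nlinarith [mul_nonneg (mul_nonneg hδ0.le hP0) hQ0, mul_nonneg hδ0.le hP0,
      mul_nonneg hδ0.le hQ0, mul_nonneg hP0 hQ0, sq_nonneg P]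
  · rw [hB', ← hB, ← hQB]
    have htinv : (t⁻¹) ^ 2 = (P + δ) / (Q + δ) := by
      rw [inv_pow, ht2, inv_div]
    rw [htinv, div_mul_eq_mul_div, div_le_iff₀ (by positivity)]
    nlinarith [mul_nonneg (mul_nonneg hδ0.le hP0) hQ0, mul_nonneg hδ0.le hP0,
      mul_nonneg hδ0.le hQ0, mul_nonneg hP0 hQ0, sq_nonneg Q]

lemma gammaTensor_add_le (hn : 0 < n) (u v : (⨂[𝕜] i, X i) ⊗[𝕜] Y) :
    gammaTensor 𝕜 (u + v) ≤ gammaTensor 𝕜 u + gammaTensor 𝕜 v := by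
  refine le_of_forall_pos_le_add fun ε hε => ?_
  have hε4 : 0 < ε / 4 := by linarith
  obtain ⟨r₁, hr₁, hr₁lt⟩ := Real.lt_sInf_add_pos (gammaSet_nonempty hn u) hε4
  obtain ⟨r₂, hr₂, hr₂lt⟩ := Real.lt_sInf_add_pos (gammaSet_nonempty hn v) hε4
  have hr₁0 : 0 ≤ r₁ := gammaSet_nonneg hr₁
  have hr₂0 : 0 ≤ r₂ := gammaSet_nonneg hr₂
  obtain ⟨m₁, p₁, q₁, a₁, b₁, y₁, hu, hle₁, hA₁, hB₁⟩ := exists_balanced hn hr₁ hε4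
  obtain ⟨m₂, p₂, q₂, a₂, b₂, y₂, hv, hle₂, hA₂, hB₂⟩ := exists_balanced hn hr₂ hε4
  obtain ⟨hsum, hlep, hπ, hy⟩ := rep_append hu hv hle₁ hle₂
  have hmem : Real.sqrt (∑ i : Fin (m₁ + m₂), projectiveSeminorm
        ((⨂ₜ[𝕜] j, Fin.append a₁ a₂ i j) - ⨂ₜ[𝕜] j, Fin.append b₁ b₂ i j) ^ 2) *
      Real.sqrt (∑ i : Fin (m₁ + m₂), ‖Fin.append y₁ y₂ i‖ ^ 2) ∈ gammaSet 𝕜 (u + v) :=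
    ⟨m₁ + m₂, _, _, _, _, _, hsum, hlep, rfl⟩
  rw [gammaTensor_eq_sInf]
  refine (csInf_le (gammaSet_bddBelow _) hmem).trans ?_
  have h1 : ∑ i : Fin (m₁ + m₂), projectiveSeminorm
      ((⨂ₜ[𝕜] j, Fin.append a₁ a₂ i j) - ⨂ₜ[𝕜] j, Fin.append b₁ b₂ i j) ^ 2
      ≤ (r₁ + r₂) + 2 * (ε / 4) := by rw [hπ]; linarith
  have h2 : ∑ i : Fin (m₁ + m₂), ‖Fin.append y₁ y₂ i‖ ^ 2 ≤ (r₁ + r₂) + 2 * (ε / 4) := by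
    rw [hy]; linarith
  calc Real.sqrt (∑ i : Fin (m₁ + m₂), projectiveSeminorm
        ((⨂ₜ[𝕜] j, Fin.append a₁ a₂ i j) - ⨂ₜ[𝕜] j, Fin.append b₁ b₂ i j) ^ 2) *
      Real.sqrt (∑ i : Fin (m₁ + m₂), ‖Fin.append y₁ y₂ i‖ ^ 2)
      ≤ Real.sqrt ((r₁ + r₂) + 2 * (ε / 4)) * Real.sqrt ((r₁ + r₂) + 2 * (ε / 4)) :=
        mul_le_mul (Real.sqrt_le_sqrt h1) (Real.sqrt_le_sqrt h2) (Real.sqrt_nonneg _)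
          (Real.sqrt_nonneg _)
    _ = (r₁ + r₂) + 2 * (ε / 4) := Real.mul_self_sqrt (by linarith)
    _ ≤ gammaTensor 𝕜 u + gammaTensor 𝕜 v + ε := by
        rw [gammaTensor_eq_sInf, gammaTensor_eq_sInf]
        linarith

lemma gammaTensor_tmul_le (x z : ∀ i, X i) (y : Y) :
    gammaTensor 𝕜 (((⨂ₜ[𝕜] i, x i) - ⨂ₜ[𝕜] i, z i) ⊗ₜ[𝕜] y) ≤
      projectiveSeminorm ((⨂ₜ[𝕜] i, x i) - ⨂ₜ[𝕜] i, z i) * ‖y‖ := by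
  rw [gammaTensor_eq_sInf]
  refine csInf_le (gammaSet_bddBelow _) ?_
  refine ⟨1, fun _ => x, fun _ => z, fun _ => x, fun _ => z, fun _ => y, ?_, fun φ => le_rfl, ?_⟩
  · rw [Fin.sum_univ_one]
  · rw [Fin.sum_univ_one, Fin.sum_univ_one, Real.sqrt_sq (apply_nonneg _ _),
      Real.sqrt_sq (norm_nonneg _)]

end GammaScale
/-- For Banach spaces `X₁,…,Xₙ, Y`, the function `γ` is a norm on
`X₁ ⊗ ⋯ ⊗ Xₙ ⊗ Y`, and `γ((p − q) ⊗ y) ≤ π(p − q) ‖y‖` for all decomposable tensors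
`p, q ∈ Σ_{X₁,…,Xₙ}` and all `y ∈ Y`. -/
theorem gammaTensor_isNorm {n : ℕ} (hn : 0 < n) {X : Fin n → Type u} {Y : Type u}
    [∀ i, NormedAddCommGroup (X i)] [∀ i, NormedSpace 𝕜 (X i)] [∀ i, CompleteSpace (X i)]
    [NormedAddCommGroup Y] [NormedSpace 𝕜 Y] [CompleteSpace Y] :
    (∀ u v : (⨂[𝕜] i, X i) ⊗[𝕜] Y,
      gammaTensor 𝕜 (u + v) ≤ gammaTensor 𝕜 u + gammaTensor 𝕜 v) ∧
    (∀ (c : 𝕜) (u : (⨂[𝕜] i, X i) ⊗[𝕜] Y),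
      gammaTensor 𝕜 (c • u) = ‖c‖ * gammaTensor 𝕜 u) ∧
    (∀ u : (⨂[𝕜] i, X i) ⊗[𝕜] Y, gammaTensor 𝕜 u = 0 ↔ u = 0) ∧
    (∀ (x z : ∀ i, X i) (y : Y),
      gammaTensor 𝕜 (((⨂ₜ[𝕜] i, x i) - ⨂ₜ[𝕜] i, z i) ⊗ₜ[𝕜] y) ≤
        projectiveSeminorm ((⨂ₜ[𝕜] i, x i) - ⨂ₜ[𝕜] i, z i) * ‖y‖) :=
  ⟨gammaTensor_add_le hn, fun c u => gammaTensor_smul hn c u,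
    gammaTensor_eq_zero_iff hn, fun x z y => gammaTensor_tmul_le x z y⟩
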